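/- If every principal submatrix of a symmetric matrix W indexed by a maximal clique of a chordal graph G is positive semidefinite, and all specified entries of W lie on edges of G (or the diagonal), then W can be completed to a positive semidefinite matrix; conversely, if W admits a positive semidefinite completion, each such clique submatrix is positive semidefinite. -/

import Mathlib

open Matrix Finset

variable {n : ℕ}

lemma gp_sum_supported (K : Finset (Fin n)) (g : Fin n → ℝ) (hg : ∀ i ∉ K, g i = 0) :
    ∑ i, g i = ∑ i : {x // x ∈ K}, g i := by
  rw [Finset.sum_coe_sort K g]
  exact (Finset.sum_subset (Finset.subset_univ K) (fun x _ hx => hg x hx)).symm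

lemma gp_mulVec_supported (M : Matrix (Fin n) (Fin n) ℝ) (K : Finset (Fin n))
    (f : Fin n → ℝ) (hf : ∀ i ∉ K, f i = 0) (j : Fin n) :
    (M.mulVec f) j = ∑ i : {x // x ∈ K}, M j i * f i := by
  rw [mulVec, dotProduct]
  exact gp_sum_supported K (fun i => M j i * f i)
    (fun i hi => by simp only [hf i hi, mul_zero])

lemma gp_dot_supported (K : Finset (Fin n)) (f w : Fin n → ℝ) (hf : ∀ i ∉ K, f i = 0) :
    f ⬝ᵥ w = ∑ i : {x // x ∈ K}, f i * w i := by
  rw [dotProduct]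
  exact gp_sum_supported K (fun i => f i * w i)
    (fun i hi => by simp only [hf i hi, zero_mul])

/-- real symmetric matrix: x ⊥ ker Q implies x ∈ range Q -/
lemma gp_range_lemma {ι : Type*} [Fintype ι] [DecidableEq ι] (Q : Matrix ι ι ℝ)
    (hQ : Q.IsHermitian) (x : ι → ℝ)
    (hx : ∀ z : ι → ℝ, Q.mulVec z = 0 → x ⬝ᵥ z = 0) :
    ∃ p : ι → ℝ, Q.mulVec p = x := by
  classical
  set T := Matrix.toEuclideanLin Q with hT
  have hsymm : T.IsSymmetric := (Matrix.isHermitian_iff_isSymmetric).1 hQ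
  have horth : (LinearMap.range T)ᗮ = LinearMap.ker T := by
    ext z
    simp only [Submodule.mem_orthogonal, LinearMap.mem_ker]
    constructor
    · intro h
      have h3 : ∀ u : EuclideanSpace ℝ ι, (inner ℝ u (T z) : ℝ) = 0 := fun u => by
        rw [← hsymm u z]
        exact h _ ⟨u, rfl⟩
      have := h3 (T z)
      rwa [real_inner_self_eq_norm_sq, pow_eq_zero_iff (by norm_num), norm_eq_zero] at this
    · rintro h u ⟨w, hw⟩
      rw [← hw, hsymm, h, inner_zero_right]
  have hrange : LinearMap.range T = (LinearMap.ker T)ᗮ := by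
    rw [← horth, Submodule.orthogonal_orthogonal]
  have hx' : (WithLp.equiv 2 (ι → ℝ)).symm x ∈ (LinearMap.ker T)ᗮ := by
    rw [Submodule.mem_orthogonal]
    intro z hz
    have hz' : Q.mulVec (WithLp.equiv 2 (ι → ℝ) z) = 0 := by
      have h0 := LinearMap.mem_ker.1 hz
      have := congrArg (WithLp.equiv 2 (ι → ℝ)) h0
      simpa [hT, Matrix.ofLp_toEuclideanLin_apply] using this
    have hdot := hx _ hz'
    rw [dotProduct] at hdot
    have : (inner ℝ z ((WithLp.equiv 2 (ι → ℝ)).symm x) : ℝ)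
        = ∑ i, x i * (WithLp.equiv 2 (ι → ℝ)) z i := by
      rw [PiLp.inner_apply]
      apply Finset.sum_congr rfl
      intro i _
      simp [RCLike.inner_apply, mul_comm]
    rw [this, ← hdot]
  rw [← hrange] at hx'
  obtain ⟨p, hp⟩ := hx'
  refine ⟨WithLp.equiv 2 (ι → ℝ) p, ?_⟩
  have := congrArg (WithLp.equiv 2 (ι → ℝ)) hp
  simpa [hT, Matrix.ofLp_toEuclideanLin_apply] using this

lemma gp_expand (M : Matrix (Fin n) (Fin n) ℝ) (f p : Fin n → ℝ) (c : ℝ) :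
    (f + c • p) ⬝ᵥ M.mulVec (f + c • p)
      = f ⬝ᵥ M.mulVec f + c * (p ⬝ᵥ M.mulVec f) + c * (f ⬝ᵥ M.mulVec p)
        + c * c * (p ⬝ᵥ M.mulVec p) := by
  simp only [Matrix.mulVec_add, Matrix.mulVec_smul, dotProduct_add, add_dotProduct,
    smul_dotProduct, dotProduct_smul, smul_eq_mul]
  ring

lemma gp_qf_of_psd (M : Matrix (Fin n) (Fin n) ℝ) (K : Finset (Fin n))
    (h : (M.submatrix (fun i : {x // x ∈ K} => (i : Fin n))
      (fun i : {x // x ∈ K} => (i : Fin n))).PosSemidef)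
    (f : Fin n → ℝ) (hf : ∀ i ∉ K, f i = 0) : 0 ≤ f ⬝ᵥ M.mulVec f := by
  have h2 := h.dotProduct_mulVec_nonneg (fun i : {x // x ∈ K} => f i)
  simp only [star_trivial] at h2
  have e1 : f ⬝ᵥ M.mulVec f = ∑ i : {x // x ∈ K}, f i * (M.mulVec f) i :=
    gp_dot_supported K f _ hf
  have e2 : ∀ i : {x // x ∈ K}, (M.mulVec f) i = ∑ j : {x // x ∈ K}, M i j * f j :=
    fun i => gp_mulVec_supported M K f hf i
  rw [e1]
  have e3 : ∀ i : {x // x ∈ K}, f i * (M.mulVec f) i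
      = (fun i : {x // x ∈ K} => f i) i *
        ((M.submatrix (fun i : {x // x ∈ K} => (i : Fin n))
          (fun i : {x // x ∈ K} => (i : Fin n))).mulVec (fun i : {x // x ∈ K} => f i)) i := by
    intro i
    rw [e2 i]
    simp [Matrix.mulVec, dotProduct, Matrix.submatrix_apply]
  rw [Finset.sum_congr rfl (fun i _ => e3 i)]
  exact h2

lemma gp_dot_symm (M : Matrix (Fin n) (Fin n) ℝ) (hM : ∀ i j, M i j = M j i)
    (a b : Fin n → ℝ) : a ⬝ᵥ M.mulVec b = b ⬝ᵥ M.mulVec a := by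
  simp only [dotProduct, Matrix.mulVec, Finset.mul_sum]
  rw [Finset.sum_comm]
  refine Finset.sum_congr rfl fun i _ => Finset.sum_congr rfl fun j _ => ?_
  rw [hM j i]
  ring

lemma gp_extend (W Wc : Matrix (Fin n) (Fin n) ℝ)
    (hWsym : ∀ i j, W i j = W j i)
    (hWc : Wc.PosSemidef)
    (s' : Finset (Fin n)) (hsupp : ∀ i j : Fin n, i ∉ s' ∨ j ∉ s' → Wc i j = 0)
    (v : Fin n) (hv : v ∉ s') (Nvs : Finset (Fin n)) (hNs : Nvs ⊆ s')
    (hQeq : ∀ j k, j ∈ Nvs → k ∈ Nvs → Wc j k = W j k)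
    (hKv : ∀ f : Fin n → ℝ, (∀ i, i ∉ insert v Nvs → f i = 0) → 0 ≤ f ⬝ᵥ W.mulVec f) :
    ∃ W' : Matrix (Fin n) (Fin n) ℝ, W'.PosSemidef ∧
      (∀ i j, i ≠ v → j ≠ v → W' i j = Wc i j) ∧
      W' v v = W v v ∧
      (∀ j, j ∈ Nvs → W' v j = W v j) ∧
      (∀ j, j ∉ s' → j ≠ v → W' v j = 0) ∧
      (∀ i j, W' i j = W' j i) := by
  classical
  have hvN : v ∉ Nvs := fun h => hv (hNs h)
  have hWcsym : ∀ i j, Wc i j = Wc j i := by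
    intro i j
    have := congrFun (congrFun hWc.1 i) j
    simpa [Matrix.conjTranspose_apply] using this.symm
  have hQhH : (W.submatrix (fun i : {x // x ∈ Nvs} => (i : Fin n))
      (fun i : {x // x ∈ Nvs} => (i : Fin n))).IsHermitian := by
    ext i j
    simp [Matrix.conjTranspose_apply, Matrix.submatrix_apply, hWsym (i : Fin n) j]
  -- range hypothesis
  have hrange : ∀ zh : {x // x ∈ Nvs} → ℝ,
      (W.submatrix (fun i : {x // x ∈ Nvs} => (i : Fin n))
        (fun i : {x // x ∈ Nvs} => (i : Fin n))).mulVec zh = 0 →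
      (fun j : {x // x ∈ Nvs} => W v j) ⬝ᵥ zh = 0 := by
    intro zh hz
    set z : Fin n → ℝ := fun i => if h : i ∈ Nvs then zh ⟨i, h⟩ else 0 with hzdef
    have hzsupp : ∀ i, i ∉ Nvs → z i = 0 := by intro i hi; simp [hzdef, hi]
    have hzval : ∀ i : {x // x ∈ Nvs}, z i = zh i := by
      intro i; simp [hzdef, i.2]
    have hWz : ∀ j, j ∈ Nvs → (W.mulVec z) j = 0 := by
      intro j hj
      rw [gp_mulVec_supported W Nvs z hzsupp j]
      have h0 : (W.submatrix (fun i : {x // x ∈ Nvs} => (i : Fin n))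
          (fun i : {x // x ∈ Nvs} => (i : Fin n))).mulVec zh ⟨j, hj⟩ = 0 := by
        rw [hz]; rfl
      rw [← h0]
      simp only [Matrix.mulVec, dotProduct, Matrix.submatrix_apply]
      exact Finset.sum_congr rfl fun i _ => by rw [hzval i]
    set β : ℝ := ∑ i : {x // x ∈ Nvs}, W v i * zh i with hβ
    have hq : ∀ t : ℝ, 0 ≤ (W v v) * (t * t) + (2 * β) * t + 0 := by
      intro t
      have hfsupp : ∀ i, i ∉ insert v Nvs →
          (z + t • (Pi.single v 1 : Fin n → ℝ)) i = 0 := by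
        intro i hi
        simp only [Finset.mem_insert, not_or] at hi
        simp [hzsupp i hi.2, Pi.single_apply, hi.1]
      have key := hKv _ hfsupp
      rw [gp_expand W z (Pi.single v 1 : Fin n → ℝ) t] at key
      have e1 : z ⬝ᵥ W.mulVec z = 0 := by
        rw [gp_dot_supported Nvs z _ hzsupp]
        apply Finset.sum_eq_zero
        intro i _
        rw [hWz i i.2, mul_zero]
      have e2 : (Pi.single v 1 : Fin n → ℝ) ⬝ᵥ W.mulVec z = β := by
        rw [single_dotProduct, one_mul,
          gp_mulVec_supported W Nvs z hzsupp v, hβ]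
        exact Finset.sum_congr rfl fun i _ => by rw [hzval i]
      have e3 : z ⬝ᵥ W.mulVec (Pi.single v 1 : Fin n → ℝ) = β := by
        rw [gp_dot_supported Nvs z _ hzsupp, hβ]
        refine Finset.sum_congr rfl fun i _ => ?_
        simp only [Matrix.mulVec_single_one, Matrix.col_apply, mul_one]
        rw [hzval i, hWsym (i : Fin n) v, mul_comm]
      have e4 : (Pi.single v 1 : Fin n → ℝ) ⬝ᵥ
          W.mulVec (Pi.single v 1 : Fin n → ℝ) = W v v := by
        simp [Matrix.mulVec_single, single_dotProduct]
      rw [e1, e2, e3, e4] at key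
      nlinarith [key]
    have hd := discrim_le_zero hq
    have hβ0 : β = 0 := by
      simp only [discrim] at hd
      nlinarith [hd]
    rw [dotProduct, ← hβ0, hβ]
  obtain ⟨ph, hph⟩ := gp_range_lemma _ hQhH _ hrange
  -- extend p by zero
  set p : Fin n → ℝ := fun i => if h : i ∈ Nvs then ph ⟨i, h⟩ else 0 with hpdef
  have hpsupp : ∀ i, i ∉ Nvs → p i = 0 := by intro i hi; simp [hpdef, hi]
  have hpval : ∀ i : {x // x ∈ Nvs}, p i = ph i := by intro i; simp [hpdef, i.2]
  -- W *ᵥ p agrees with target column on Nvs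
  have hWp : ∀ j, j ∈ Nvs → (W.mulVec p) j = W v j := by
    intro j hj
    rw [gp_mulVec_supported W Nvs p hpsupp j]
    have h0 := congrFun hph ⟨j, hj⟩
    rw [← h0]
    simp only [Matrix.mulVec, dotProduct, Matrix.submatrix_apply]
    exact Finset.sum_congr rfl fun i _ => by rw [hpval i]
  set z' : Fin n → ℝ := Wc.mulVec p with hz'def
  have hz'N : ∀ j, j ∈ Nvs → z' j = W v j := by
    intro j hj
    rw [hz'def, gp_mulVec_supported Wc Nvs p hpsupp j]
    rw [← hWp j hj, gp_mulVec_supported W Nvs p hpsupp j]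
    exact Finset.sum_congr rfl fun i _ => by rw [hQeq j i hj i.2]
  have hz'0 : ∀ j, j ∉ s' → z' j = 0 := by
    intro j hj
    rw [hz'def, gp_mulVec_supported Wc Nvs p hpsupp j]
    apply Finset.sum_eq_zero
    intro i _
    rw [hsupp j i (Or.inl hj), zero_mul]
  -- d = p ⬝ᵥ Wc *ᵥ p and bound d ≤ W v v
  have hpWp : p ⬝ᵥ W.mulVec p = ∑ i : {x // x ∈ Nvs}, p i * W v i := by
    rw [gp_dot_supported Nvs p _ hpsupp]
    exact Finset.sum_congr rfl fun i _ => by rw [hWp i i.2]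
  have hpWcp : p ⬝ᵥ Wc.mulVec p = p ⬝ᵥ W.mulVec p := by
    rw [gp_dot_supported Nvs p _ hpsupp, gp_dot_supported Nvs p _ hpsupp]
    refine Finset.sum_congr rfl fun i _ => ?_
    rw [gp_mulVec_supported Wc Nvs p hpsupp i, gp_mulVec_supported W Nvs p hpsupp i]
    congr 1
    exact Finset.sum_congr rfl fun k _ => by rw [hQeq i k i.2 k.2]
  have hdle : p ⬝ᵥ W.mulVec p ≤ W v v := by
    have hgsupp : ∀ i, i ∉ insert v Nvs →
        ((-1 : ℝ) • p + (1:ℝ) • (Pi.single v 1 : Fin n → ℝ)) i = 0 := by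
      intro i hi
      simp only [Finset.mem_insert, not_or] at hi
      simp [hpsupp i hi.2, Pi.single_apply, hi.1]
    have key := hKv _ hgsupp
    have hrw : ((-1 : ℝ) • p + (1:ℝ) • (Pi.single v 1 : Fin n → ℝ))
        = ((-1 : ℝ) • p) + (1:ℝ) • (Pi.single v 1 : Fin n → ℝ) := rfl
    rw [hrw, gp_expand W ((-1 : ℝ) • p) (Pi.single v 1 : Fin n → ℝ) 1] at key
    have eA : ((-1 : ℝ) • p) ⬝ᵥ W.mulVec ((-1 : ℝ) • p) = p ⬝ᵥ W.mulVec p := by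
      rw [smul_dotProduct, Matrix.mulVec_smul, dotProduct_smul]
      simp
    have eB : (Pi.single v 1 : Fin n → ℝ) ⬝ᵥ W.mulVec ((-1 : ℝ) • p)
        = - (p ⬝ᵥ W.mulVec p) := by
      rw [Matrix.mulVec_smul, dotProduct_smul, single_dotProduct, one_mul]
      rw [gp_mulVec_supported W Nvs p hpsupp v, hpWp]
      simp only [smul_eq_mul, neg_one_mul, neg_inj]
      exact Finset.sum_congr rfl fun i _ => mul_comm _ _
    have eC : ((-1 : ℝ) • p) ⬝ᵥ W.mulVec (Pi.single v 1 : Fin n → ℝ)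
        = - (p ⬝ᵥ W.mulVec p) := by
      rw [smul_dotProduct]
      simp only [smul_eq_mul, neg_one_mul, neg_inj]
      rw [gp_dot_supported Nvs p _ hpsupp, hpWp]
      refine Finset.sum_congr rfl fun i _ => ?_
      simp only [Matrix.mulVec_single_one, Matrix.col_apply, mul_one]
      rw [hWsym (i : Fin n) v]
    have eD : (Pi.single v 1 : Fin n → ℝ) ⬝ᵥ
        W.mulVec (Pi.single v 1 : Fin n → ℝ) = W v v := by
      simp [Matrix.mulVec_single, single_dotProduct]
    rw [eA, eB, eC, eD] at key
    linarith [key]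
  -- now construct W'
  set α : ℝ := W v v with hα
  set W' : Matrix (Fin n) (Fin n) ℝ := Matrix.of fun i j =>
    Wc i j + (if j = v then z' i else 0) + (if i = v then z' j else 0)
      + (if i = v ∧ j = v then α else 0) with hW'def
  have hW'app : ∀ i j, W' i j = Wc i j + (if j = v then z' i else 0)
      + (if i = v then z' j else 0) + (if i = v ∧ j = v then α else 0) := fun i j => rfl
  have hz'v : z' v = 0 := hz'0 v hv
  have hWcv : ∀ j, Wc v j = 0 := fun j => hsupp v j (Or.inl hv)
  have hWcv' : ∀ j, Wc j v = 0 := fun j => hsupp j v (Or.inr hv)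
  have hsym' : ∀ i j, W' i j = W' j i := by
    intro i j
    rw [hW'app, hW'app, hWcsym i j]
    by_cases hiv : i = v <;> by_cases hjv : j = v <;> simp [hiv, hjv] <;> ring
  have hmv : ∀ (f : Fin n → ℝ) (i), (W'.mulVec f) i = (Wc.mulVec f) i + z' i * f v
      + (if i = v then z' ⬝ᵥ f else 0) + (if i = v then α * f v else 0) := by
    intro f i
    show (∑ j, (Wc i j + (if j = v then z' i else 0) + (if i = v then z' j else 0)
      + (if i = v ∧ j = v then α else 0)) * f j) = _
    simp only [add_mul, ite_mul, zero_mul]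
    rw [Finset.sum_add_distrib, Finset.sum_add_distrib, Finset.sum_add_distrib]
    congr 1
    · congr 1
      · congr 1
        simp [Finset.sum_ite_eq']
      · by_cases hiv : i = v <;> simp [hiv, dotProduct]
    · by_cases hiv : i = v <;> simp [hiv, Finset.sum_ite_eq']
  have hquad : ∀ f : Fin n → ℝ, f ⬝ᵥ W'.mulVec f = f ⬝ᵥ Wc.mulVec f
      + 2 * f v * (f ⬝ᵥ Wc.mulVec p) + α * f v * f v := by
    intro f
    have : f ⬝ᵥ W'.mulVec f = ∑ i, f i * ((Wc.mulVec f) i + z' i * f v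
        + (if i = v then z' ⬝ᵥ f else 0) + (if i = v then α * f v else 0)) := by
      rw [dotProduct]
      exact Finset.sum_congr rfl fun i _ => by rw [hmv f i]
    rw [this]
    simp only [mul_add, mul_ite, mul_zero]
    rw [Finset.sum_add_distrib, Finset.sum_add_distrib, Finset.sum_add_distrib]
    have e1 : ∑ i, f i * ((Wc.mulVec f) i) = f ⬝ᵥ Wc.mulVec f := rfl
    have e2 : ∑ i, f i * (z' i * f v) = (f ⬝ᵥ Wc.mulVec p) * f v := by
      have hzz : f ⬝ᵥ Wc.mulVec p = f ⬝ᵥ z' := rfl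
      rw [hzz, dotProduct, Finset.sum_mul]
      exact Finset.sum_congr rfl fun i _ => by ring
    have e3 : (∑ i, if i = v then f i * (z' ⬝ᵥ f) else 0) = f v * (f ⬝ᵥ Wc.mulVec p) := by
      rw [Finset.sum_ite_eq' Finset.univ v (fun i => f i * (z' ⬝ᵥ f))]
      simp only [Finset.mem_univ, if_true]
      have hzz : z' ⬝ᵥ f = f ⬝ᵥ Wc.mulVec p := by
        rw [dotProduct_comm]
      rw [hzz]
    have e4 : (∑ i, if i = v then f i * (α * f v) else 0) = α * f v * f v := by
      rw [Finset.sum_ite_eq' Finset.univ v (fun i => f i * (α * f v))]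
      simp only [Finset.mem_univ, if_true]
      ring
    rw [e1, e2, e3, e4]
    ring
  have hpsd : W'.PosSemidef := by
    refine Matrix.PosSemidef.of_dotProduct_mulVec_nonneg ?_ ?_
    · ext i j
      rw [Matrix.conjTranspose_apply, star_trivial, hsym' j i]
    · intro f
      simp only [star_trivial]
      rw [hquad f]
      have key := hWc.dotProduct_mulVec_nonneg (f + (f v) • p)
      simp only [star_trivial] at key
      rw [gp_expand Wc f p (f v)] at key
      have hBB : p ⬝ᵥ Wc.mulVec f = f ⬝ᵥ Wc.mulVec p := gp_dot_symm Wc hWcsym p f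
      rw [hBB] at key
      have hd2 : p ⬝ᵥ Wc.mulVec p ≤ α := by rw [hpWcp]; exact hdle
      nlinarith [key, hd2, sq_nonneg (f v)]
  refine ⟨W', hpsd, ?_, ?_, ?_, ?_, hsym'⟩
  · intro i j hi hj
    rw [hW'app]
    simp [hi, hj]
  · rw [hW'app]
    simp [hWcv v, hz'v]
  · intro j hj
    have hjv : j ≠ v := fun h => hvN (h ▸ hj)
    rw [hW'app]
    simp [hjv, hWcv j, hz'N j hj]
  · intro j hj hjv
    rw [hW'app]
    simp [hjv, hWcv j, hz'0 j hj]
open Finset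

section Walks
variable {V : Type*} [DecidableEq V] {G : SimpleGraph V}

lemma gp_edge_getVert {u w : V} (p : G.Walk u w) :
    ∀ i, i < p.length → s(p.getVert i, p.getVert (i + 1)) ∈ p.edges := by
  induction p with
  | nil => intro i hi; simp at hi
  | cons h q ih =>
    intro i hi
    cases i with
    | zero =>
      simp [SimpleGraph.Walk.getVert_zero, SimpleGraph.Walk.getVert_cons_succ,
        SimpleGraph.Walk.edges_cons]
    | succ i =>
      simp only [SimpleGraph.Walk.getVert_cons_succ, SimpleGraph.Walk.edges_cons,
        List.mem_cons]
      right
      exact ih i (by simpa [SimpleGraph.Walk.length_cons, Nat.succ_lt_succ_iff] using hi)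

lemma gp_getVert_takeUntil {u w x : V} (p : G.Walk u w) (hx : x ∈ p.support) :
    p.getVert (p.takeUntil x hx).length = x := by
  have h := SimpleGraph.Walk.take_spec p hx
  have h2 := congrArg (fun q => SimpleGraph.Walk.getVert q ((p.takeUntil x hx).length)) h
  rw [← h2, SimpleGraph.Walk.getVert_append]
  simp

lemma gp_length_take_add {u w x : V} (p : G.Walk u w) (hx : x ∈ p.support) :
    (p.takeUntil x hx).length + (p.dropUntil x hx).length = p.length := by
  have h := congrArg SimpleGraph.Walk.length (SimpleGraph.Walk.take_spec p hx)
  rw [SimpleGraph.Walk.length_append] at h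
  exact h

lemma gp_shortcut {u w : V} (p : G.Walk u w) (hp : p.IsPath)
    {x y : V} (hx : x ∈ p.support) (hy : y ∈ p.support) (hadj : G.Adj x y)
    (hne : s(x, y) ∉ p.edges) :
    ∃ q : G.Walk u w, q.length < p.length ∧ ∀ z ∈ q.support, z ∈ p.support := by
  -- auxiliary: given order, construct
  have main : ∀ (x y : V) (hx : x ∈ p.support) (hy : y ∈ p.support), G.Adj x y →
      s(x, y) ∉ p.edges →
      (p.takeUntil x hx).length < (p.takeUntil y hy).length →
      ∃ q : G.Walk u w, q.length < p.length ∧ ∀ z ∈ q.support, z ∈ p.support := by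
    intro x y hx hy hadj hne hij
    set i := (p.takeUntil x hx).length with hi
    set j := (p.takeUntil y hy).length with hj
    have hij2 : i + 1 < j := by
      rcases Nat.lt_or_ge (i + 1) j with h | h
      · exact h
      · exfalso
        have : j = i + 1 := le_antisymm h hij
        have hiL : i < p.length := by
          have := SimpleGraph.Walk.length_takeUntil_le p hy
          omega
        have hmem := gp_edge_getVert p i hiL
        rw [gp_getVert_takeUntil p hx] at hmem
        have h2 : p.getVert (i + 1) = y := by
          rw [← this, gp_getVert_takeUntil p hy]
        rw [h2] at hmem
        exact hne hmem
    refine ⟨(p.takeUntil x hx).append ((p.dropUntil y hy).cons hadj), ?_, ?_⟩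
    · rw [SimpleGraph.Walk.length_append, SimpleGraph.Walk.length_cons]
      have := gp_length_take_add p hy
      omega
    · intro z hz
      rw [SimpleGraph.Walk.mem_support_append_iff] at hz
      rcases hz with hz | hz
      · exact SimpleGraph.Walk.support_takeUntil_subset p hx hz
      · rw [SimpleGraph.Walk.support_cons, List.mem_cons] at hz
        rcases hz with rfl | hz
        · exact hx
        · exact SimpleGraph.Walk.support_dropUntil_subset p hy hz
  have hxy : x ≠ y := hadj.ne
  have hdiff : (p.takeUntil x hx).length ≠ (p.takeUntil y hy).length := by
    intro h
    apply hxy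
    rw [← gp_getVert_takeUntil p hx, ← gp_getVert_takeUntil p hy, h]
  rcases Nat.lt_or_ge (p.takeUntil x hx).length (p.takeUntil y hy).length with h | h
  · exact main x y hx hy hadj hne h
  · exact main y x hy hx hadj.symm (by rwa [Sym2.eq_swap]) (by omega)

end Walks

section Cyc
variable {V : Type*} [DecidableEq V] {G : SimpleGraph V}

lemma gp_two_le_length {u w : V} (p : G.Walk u w) (hne : u ≠ w) (hnadj : ¬G.Adj u w) :
    2 ≤ p.length := by
  cases p with
  | nil => exact absurd rfl hne
  | cons h q =>
    cases q with
    | nil => exact absurd h hnadj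
    | cons h' q' => simp only [SimpleGraph.Walk.length_cons]; omega

lemma gp_build_cycle {u₁ u₂ : V} (hne : u₁ ≠ u₂) (hnadj : ¬G.Adj u₁ u₂)
    (P Q : G.Walk u₁ u₂) (hP : P.IsPath) (hQ : Q.IsPath)
    (A B : V → Prop)
    (hPsupp : ∀ z ∈ P.support, z = u₁ ∨ z = u₂ ∨ A z)
    (hQsupp : ∀ z ∈ Q.support, z = u₁ ∨ z = u₂ ∨ B z)
    (hA1 : ¬ A u₁) (hA2 : ¬ A u₂) (hB1 : ¬ B u₁) (hB2 : ¬ B u₂)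
    (hAB : ∀ z, A z → B z → False)
    (hPl : 2 ≤ P.length) (hQl : 2 ≤ Q.length) :
    (P.append Q.reverse).IsCycle ∧ 4 ≤ (P.append Q.reverse).length := by
  have hQr : Q.reverse.IsPath := hQ.reverse
  have hlen : (P.append Q.reverse).length = P.length + Q.length := by
    rw [SimpleGraph.Walk.length_append, SimpleGraph.Walk.length_reverse]
  constructor
  · rw [SimpleGraph.Walk.isCycle_def]
    refine ⟨⟨?_⟩, ?_, ?_⟩
    · -- edges nodup
      rw [SimpleGraph.Walk.edges_append]
      rw [List.nodup_append]
      refine ⟨hP.isTrail.edges_nodup, hQr.isTrail.edges_nodup, ?_⟩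
      intro e heP e₂ heQ hee
      subst hee
      have heQ' : e ∈ Q.edges := by
        rw [SimpleGraph.Walk.edges_reverse, List.mem_reverse] at heQ
        exact heQ
      induction e with
      | h c d =>
        have hcP : c ∈ P.support := SimpleGraph.Walk.fst_mem_support_of_mem_edges P heP
        have hdP : d ∈ P.support := SimpleGraph.Walk.snd_mem_support_of_mem_edges P heP
        have hcQ : c ∈ Q.support := SimpleGraph.Walk.fst_mem_support_of_mem_edges Q heQ'
        have hdQ : d ∈ Q.support := SimpleGraph.Walk.snd_mem_support_of_mem_edges Q heQ'
        have hadj : G.Adj c d := by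
          have := SimpleGraph.Walk.edges_subset_edgeSet P heP
          rwa [SimpleGraph.mem_edgeSet] at this
        have hc : c = u₁ ∨ c = u₂ := by
          rcases hPsupp c hcP with h | h | h
          · left; exact h
          · right; exact h
          · rcases hQsupp c hcQ with h' | h' | h'
            · left; exact h'
            · right; exact h'
            · exact absurd h' (fun h'' => hAB c h h'')
        have hd : d = u₁ ∨ d = u₂ := by
          rcases hPsupp d hdP with h | h | h
          · left; exact h
          · right; exact h
          · rcases hQsupp d hdQ with h' | h' | h'
            · left; exact h'
            · right; exact h'
            · exact absurd h' (fun h'' => hAB d h h'')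
        rcases hc with rfl | rfl <;> rcases hd with rfl | rfl
        · exact hadj.ne rfl
        · exact hnadj hadj
        · exact hnadj hadj.symm
        · exact hadj.ne rfl
    · -- ≠ nil
      intro h
      have := congrArg SimpleGraph.Walk.length h
      rw [hlen] at this
      simp only [SimpleGraph.Walk.length_nil] at this
      omega
    · -- support tail nodup
      have hsupp : (P.append Q.reverse).support
          = u₁ :: (P.support.tail ++ Q.reverse.support.tail) := by
        rw [SimpleGraph.Walk.support_append]
        rw [SimpleGraph.Walk.support_eq_cons P]
        rfl
      rw [hsupp, List.tail_cons, List.nodup_append]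
      have hPn := hP.support_nodup
      rw [SimpleGraph.Walk.support_eq_cons P, List.nodup_cons] at hPn
      have hQrn := hQr.support_nodup
      rw [SimpleGraph.Walk.support_eq_cons Q.reverse, List.nodup_cons] at hQrn
      have hPtail : ∀ z ∈ P.support.tail, z = u₂ ∨ A z := by
        intro z hz
        have hzs : z ∈ P.support := List.mem_of_mem_tail hz
        have hz1 : z ≠ u₁ := fun h => hPn.1 (h ▸ hz)
        rcases hPsupp z hzs with h | h | h
        · exact absurd h hz1
        · exact Or.inl h
        · exact Or.inr h
      have hQrtail : ∀ z ∈ Q.reverse.support.tail, z = u₁ ∨ B z := by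
        intro z hz
        have hzs : z ∈ Q.support := by
          have : z ∈ Q.reverse.support := List.mem_of_mem_tail hz
          rwa [SimpleGraph.Walk.support_reverse, List.mem_reverse] at this
        have hz2 : z ≠ u₂ := fun h => hQrn.1 (h ▸ hz)
        rcases hQsupp z hzs with h | h | h
        · exact Or.inl h
        · exact absurd h hz2
        · exact Or.inr h
      refine ⟨hPn.2, hQrn.2, ?_⟩
      intro z hz1 z₂ hz2 hzz
      subst hzz
      rcases hPtail z hz1 with rfl | h <;> rcases hQrtail z hz2 with h' | h'
      · exact hne h'.symm
      · exact hB2 h'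
      · exact hA1 (h' ▸ h)
      · exact hAB z h h'
  · omega
end Cyc
variable {n : ℕ}


section F
variable {G : SimpleGraph (Fin n)}

/-- a minimal-length walk with support property exists, and is a path -/
lemma gp_min_walk (u₁ u₂ : Fin n) (A : Finset (Fin n))
    (P₀ : G.Walk u₁ u₂) (hP₀ : ∀ z ∈ P₀.support, z = u₁ ∨ z = u₂ ∨ z ∈ A) :
    ∃ P : G.Walk u₁ u₂, (∀ z ∈ P.support, z = u₁ ∨ z = u₂ ∨ z ∈ A) ∧ P.IsPath ∧
      ∀ P₂ : G.Walk u₁ u₂, (∀ z ∈ P₂.support, z = u₁ ∨ z = u₂ ∨ z ∈ A) →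
        P.length ≤ P₂.length := by
  classical
  set L : Set ℕ := {l | ∃ P : G.Walk u₁ u₂,
      (∀ z ∈ P.support, z = u₁ ∨ z = u₂ ∨ z ∈ A) ∧ P.length = l} with hL
  have hLne : L.Nonempty := ⟨P₀.length, P₀, hP₀, rfl⟩
  obtain ⟨P1, hP1, hP1len⟩ := Nat.sInf_mem hLne
  refine ⟨P1.bypass, ?_, SimpleGraph.Walk.bypass_isPath P1, ?_⟩
  · intro z hz
    exact hP1 z (SimpleGraph.Walk.support_bypass_subset P1 hz)
  · intro P₂ hP₂
    have h1 : sInf L ≤ P₂.length := Nat.sInf_le ⟨P₂, hP₂, rfl⟩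
    have h2 : P1.bypass.length ≤ P1.length := SimpleGraph.Walk.length_bypass_le P1
    omega

lemma gp_sep_clique
    (hchordal : ∀ (v : Fin n) (w : G.Walk v v), w.IsCycle → 4 ≤ w.length →
      ∃ a b : Fin n, a ∈ w.support ∧ b ∈ w.support ∧ G.Adj a b ∧ s(a, b) ∉ w.edges)
    (tS A B : Finset (Fin n))
    (hABdisj : ∀ z, z ∈ A → z ∈ B → False)
    (hAcl : ∀ x ∈ A, ∀ y, G.Adj x y → y ∈ tS → y ∈ A)
    (hBcl : ∀ x ∈ B, ∀ y, G.Adj x y → y ∈ tS → y ∈ B)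
    (hAsub : A ⊆ tS) (hBsub : B ⊆ tS)
    (hAconn : ∀ x ∈ A, ∀ y ∈ A, ∃ q : G.Walk x y, ∀ z ∈ q.support, z ∈ A)
    (hBconn : ∀ x ∈ B, ∀ y ∈ B, ∃ q : G.Walk x y, ∀ z ∈ q.support, z ∈ B)
    {u₁ u₂ : Fin n} (hu1 : u₁ ∉ tS) (hu2 : u₂ ∉ tS) (hne : u₁ ≠ u₂)
    (x₁ : Fin n) (hx₁ : x₁ ∈ A) (hux₁ : G.Adj u₁ x₁)
    (x₂ : Fin n) (hx₂ : x₂ ∈ A) (hux₂ : G.Adj u₂ x₂)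
    (y₁ : Fin n) (hy₁ : y₁ ∈ B) (huy₁ : G.Adj u₁ y₁)
    (y₂ : Fin n) (hy₂ : y₂ ∈ B) (huy₂ : G.Adj u₂ y₂) :
    G.Adj u₁ u₂ := by
  classical
  by_contra hnadj
  -- minimal path through A
  obtain ⟨qA, hqA⟩ := hAconn x₁ hx₁ x₂ hx₂
  have hP₀ : ∀ z ∈ ((qA.concat hux₂.symm).cons hux₁).support,
      z = u₁ ∨ z = u₂ ∨ z ∈ A := by
    intro z hz
    rw [SimpleGraph.Walk.support_cons, List.mem_cons] at hz
    rcases hz with rfl | hz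
    · exact Or.inl rfl
    · rw [SimpleGraph.Walk.support_concat, List.mem_append] at hz
      rcases hz with hz | hz
      · exact Or.inr (Or.inr (hqA z hz))
      · rw [List.mem_singleton] at hz
        exact Or.inr (Or.inl hz)
  obtain ⟨P, hPsupp, hPpath, hPmin⟩ := gp_min_walk u₁ u₂ A _ hP₀
  obtain ⟨qB, hqB⟩ := hBconn y₁ hy₁ y₂ hy₂
  have hQ₀ : ∀ z ∈ ((qB.concat huy₂.symm).cons huy₁).support,
      z = u₁ ∨ z = u₂ ∨ z ∈ B := by
    intro z hz
    rw [SimpleGraph.Walk.support_cons, List.mem_cons] at hz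
    rcases hz with rfl | hz
    · exact Or.inl rfl
    · rw [SimpleGraph.Walk.support_concat, List.mem_append] at hz
      rcases hz with hz | hz
      · exact Or.inr (Or.inr (hqB z hz))
      · rw [List.mem_singleton] at hz
        exact Or.inr (Or.inl hz)
  obtain ⟨Q, hQsupp, hQpath, hQmin⟩ := gp_min_walk u₁ u₂ B _ hQ₀
  have hu1A : u₁ ∉ A := fun h => hu1 (hAsub h)
  have hu2A : u₂ ∉ A := fun h => hu2 (hAsub h)
  have hu1B : u₁ ∉ B := fun h => hu1 (hBsub h)
  have hu2B : u₂ ∉ B := fun h => hu2 (hBsub h)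
  have hPl : 2 ≤ P.length := gp_two_le_length P hne hnadj
  have hQl : 2 ≤ Q.length := gp_two_le_length Q hne hnadj
  obtain ⟨hcyc, hlen4⟩ := gp_build_cycle hne hnadj P Q hPpath hQpath
    (fun z => z ∈ A) (fun z => z ∈ B) hPsupp hQsupp hu1A hu2A hu1B hu2B hABdisj hPl hQl
  obtain ⟨c, d, hc, hd, hcd, hcdE⟩ := hchordal u₁ (P.append Q.reverse) hcyc hlen4
  -- support classification
  have hCsupp : ∀ z ∈ (P.append Q.reverse).support, z ∈ P.support ∨ z ∈ Q.support := by
    intro z hz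
    rw [SimpleGraph.Walk.mem_support_append_iff] at hz
    rcases hz with hz | hz
    · exact Or.inl hz
    · rw [SimpleGraph.Walk.support_reverse, List.mem_reverse] at hz
      exact Or.inr hz
  have hPedge : s(c, d) ∉ P.edges := by
    intro h
    apply hcdE
    rw [SimpleGraph.Walk.edges_append, List.mem_append]
    exact Or.inl h
  have hQedge : s(c, d) ∉ Q.edges := by
    intro h
    apply hcdE
    rw [SimpleGraph.Walk.edges_append, List.mem_append]
    right
    rw [SimpleGraph.Walk.edges_reverse, List.mem_reverse]
    exact h
  -- shortcut contradiction inside P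
  have hshortP : ¬ (c ∈ P.support ∧ d ∈ P.support) := by
    rintro ⟨hcP, hdP⟩
    obtain ⟨q, hqlen, hqsupp⟩ := gp_shortcut P hPpath hcP hdP hcd hPedge
    have := hPmin q (fun z hz => hPsupp z (hqsupp z hz))
    omega
  have hshortQ : ¬ (c ∈ Q.support ∧ d ∈ Q.support) := by
    rintro ⟨hcQ, hdQ⟩
    obtain ⟨q, hqlen, hqsupp⟩ := gp_shortcut Q hQpath hcQ hdQ hcd hQedge
    have := hQmin q (fun z hz => hQsupp z (hqsupp z hz))
    omega
  -- remaining: crossing chord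
  have hcross : ∀ c' d', c' ∈ P.support → d' ∈ Q.support → d' ∉ P.support →
      c' ∉ Q.support → G.Adj c' d' → False := by
    intro c' d' hc'P hd'Q hd'P hc'Q hadj
    have hc'A : c' ∈ A := by
      rcases hPsupp c' hc'P with rfl | rfl | h
      · exact absurd Q.start_mem_support hc'Q
      · exact absurd Q.end_mem_support hc'Q
      · exact h
    have hd'B : d' ∈ B := by
      rcases hQsupp d' hd'Q with rfl | rfl | h
      · exact absurd P.start_mem_support hd'P
      · exact absurd P.end_mem_support hd'P
      · exact h
    exact hABdisj d' (hAcl c' hc'A d' hadj (hBsub hd'B)) hd'B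
  rcases hCsupp c hc with hcP | hcQ <;> rcases hCsupp d hd with hdP | hdQ
  · exact hshortP ⟨hcP, hdP⟩
  · by_cases hdP : d ∈ P.support
    · exact hshortP ⟨hcP, hdP⟩
    · by_cases hcQ : c ∈ Q.support
      · exact hshortQ ⟨hcQ, hdQ⟩
      · exact hcross c d hcP hdQ hdP hcQ hcd
  · by_cases hcP : c ∈ P.support
    · exact hshortP ⟨hcP, hdP⟩
    · by_cases hdQ : d ∈ Q.support
      · exact hshortQ ⟨hcQ, hdQ⟩
      · exact hcross d c hdP hcQ hcP hdQ hcd.symm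
  · exact hshortQ ⟨hcQ, hdQ⟩
end F

/-- reachability within a vertex set `t` (walk in `G` with all support in `t`) -/
def gpR (G : SimpleGraph (Fin n)) (t : Finset (Fin n)) (a x : Fin n) : Prop :=
  ∃ p : G.Walk a x, ∀ y ∈ p.support, y ∈ t

/-- `v` is simplicial within `t` -/
def gpSimp (G : SimpleGraph (Fin n)) (t : Finset (Fin n)) (v : Fin n) : Prop :=
  v ∈ t ∧ ∀ x y, x ∈ t → y ∈ t → G.Adj v x → G.Adj v y → x ≠ y → G.Adj x y

namespace gpR

variable {G : SimpleGraph (Fin n)} {t : Finset (Fin n)}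

lemma refl {a : Fin n} (ha : a ∈ t) : gpR G t a a :=
  ⟨SimpleGraph.Walk.nil, by simp [ha]⟩

lemma symm {a x : Fin n} (h : gpR G t a x) : gpR G t x a := by
  obtain ⟨p, hp⟩ := h
  exact ⟨p.reverse, by simp only [SimpleGraph.Walk.support_reverse, List.mem_reverse]; exact hp⟩

lemma trans {a x y : Fin n} (h1 : gpR G t a x) (h2 : gpR G t x y) : gpR G t a y := by
  obtain ⟨p, hp⟩ := h1
  obtain ⟨q, hq⟩ := h2
  refine ⟨p.append q, ?_⟩
  intro z hz
  rw [SimpleGraph.Walk.mem_support_append_iff] at hz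
  rcases hz with hz | hz
  · exact hp z hz
  · exact hq z hz

lemma extend {a x y : Fin n} (h : gpR G t a x) (hadj : G.Adj x y) (hy : y ∈ t) :
    gpR G t a y := by
  obtain ⟨p, hp⟩ := h
  refine ⟨p.concat hadj, ?_⟩
  intro z hz
  rw [SimpleGraph.Walk.support_concat, List.mem_append] at hz
  rcases hz with hz | hz
  · exact hp z hz
  · rw [List.mem_singleton] at hz
    exact hz ▸ hy

lemma of_mem_support {a x y : Fin n} (p : G.Walk a x) (hp : ∀ z ∈ p.support, z ∈ t)
    (hy : y ∈ p.support) : gpR G t a y :=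
  ⟨p.takeUntil y hy, fun z hz => hp z (SimpleGraph.Walk.support_takeUntil_subset p hy hz)⟩

end gpR

lemma gp_no_pair_walk {G : SimpleGraph (Fin n)} {a b : Fin n} (hne : a ≠ b)
    (hnadj : ¬G.Adj a b) (p : G.Walk a b) (h : ∀ y ∈ p.support, y = a ∨ y = b) : False := by
  cases p with
  | nil => exact hne rfl
  | @cons _ c _ h' q =>
    have hc : c ∈ (SimpleGraph.Walk.cons h' q).support := by
      rw [SimpleGraph.Walk.support_cons]
      exact List.mem_cons_of_mem _ q.start_mem_support
    rcases h c hc with rfl | rfl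
    · exact h'.ne rfl
    · exact hnadj h'

/-- every vertex of a minimal separator-ish set has a neighbor in the component of `a` -/
lemma gp_nbr_helper {G : SimpleGraph (Fin n)} {t S : Finset (Fin n)} {u a d : Fin n}
    (hau : a ≠ u) (w : G.Walk a d) (hsupp : ∀ y ∈ w.support, y ∈ t \ (S.erase u))
    (huw : u ∈ w.support) :
    ∃ x, (x ∈ t \ S ∧ gpR G (t \ S) a x) ∧ G.Adj u x := by
  classical
  set q := w.takeUntil u huw with hq
  have hqsupp : ∀ y ∈ q.support, y ∈ t \ (S.erase u) :=
    fun y hy => hsupp y (SimpleGraph.Walk.support_takeUntil_subset w huw hy)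
  have hcount : q.support.count u = 1 := SimpleGraph.Walk.count_support_takeUntil_eq_one w huw
  -- reverse of q
  have hnotnil : ¬ q.reverse.Nil := by
    intro hnil
    exact hau hnil.eq.symm
  obtain ⟨c, hadj, r', hr⟩ := SimpleGraph.Walk.not_nil_iff.mp hnotnil
  · have hrsupp : q.reverse.support = u :: r'.support := by rw [hr]; rfl
    have hur' : u ∉ r'.support := by
      have h1 : q.reverse.support.count u = 1 := by
        rw [SimpleGraph.Walk.support_reverse, List.count_reverse]
        exact hcount
      rw [hrsupp, List.count_cons_self] at h1
      have : r'.support.count u = 0 := by omega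
      exact fun hmem => by simp [List.count_eq_zero.mp this] at hmem
    have hr'supp : ∀ y ∈ r'.support, y ∈ t \ S := by
      intro y hy
      have hyq : y ∈ q.support := by
        have : y ∈ q.reverse.support := by rw [hrsupp]; exact List.mem_cons_of_mem _ hy
        rwa [SimpleGraph.Walk.support_reverse, List.mem_reverse] at this
      have h1 := hqsupp y hyq
      rw [Finset.mem_sdiff] at h1 ⊢
      refine ⟨h1.1, fun hyS => h1.2 ?_⟩
      rw [Finset.mem_erase]
      exact ⟨fun h => hur' (h ▸ hy), hyS⟩
    refine ⟨c, ⟨hr'supp c r'.start_mem_support, ?_⟩, hadj⟩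
    exact ⟨r'.reverse, by
      simp only [SimpleGraph.Walk.support_reverse, List.mem_reverse]
      exact hr'supp⟩
section G
variable {G : SimpleGraph (Fin n)}

lemma gp_comp_conn {t S A : Finset (Fin n)} {a : Fin n}
    (hAchar : ∀ x, x ∈ A ↔ x ∈ t \ S ∧ gpR G (t \ S) a x) :
    ∀ x ∈ A, ∀ y ∈ A, ∃ q : G.Walk x y, ∀ z ∈ q.support, z ∈ A := by
  intro x hx y hy
  obtain ⟨px, hpx⟩ := ((hAchar x).mp hx).2
  obtain ⟨py, hpy⟩ := ((hAchar y).mp hy).2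
  refine ⟨px.reverse.append py, ?_⟩
  intro z hz
  rw [SimpleGraph.Walk.mem_support_append_iff] at hz
  rcases hz with hz | hz
  · rw [SimpleGraph.Walk.support_reverse, List.mem_reverse] at hz
    exact (hAchar z).mpr ⟨hpx z hz, gpR.of_mem_support px hpx hz⟩
  · exact (hAchar z).mpr ⟨hpy z hz, gpR.of_mem_support py hpy hz⟩

lemma gp_side (m : ℕ) (t S A : Finset (Fin n)) (a : Fin n)
    (IH : ∀ t' : Finset (Fin n), t'.card ≤ m → G.IsClique (↑t') ∨
      ∃ v w, v ≠ w ∧ ¬G.Adj v w ∧ gpSimp G t' v ∧ gpSimp G t' w)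
    (hSt : S ⊆ t)
    (hAchar : ∀ x, x ∈ A ↔ x ∈ t \ S ∧ gpR G (t \ S) a x)
    (haA : a ∈ A)
    (hScl : ∀ u₁ ∈ S, ∀ u₂ ∈ S, u₁ ≠ u₂ → G.Adj u₁ u₂)
    (hcard : (A ∪ S).card ≤ m) :
    ∃ v, v ∈ A ∧ gpSimp G t v := by
  have hAsub : ∀ x ∈ A, x ∈ t \ S := fun x hx => ((hAchar x).mp hx).1
  have hedge : ∀ x ∈ A, ∀ y, G.Adj x y → y ∈ t \ S → y ∈ A := by
    intro x hx y hadj hy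
    exact (hAchar y).mpr ⟨hy, gpR.extend ((hAchar x).mp hx).2 hadj hy⟩
  have hnbr : ∀ v ∈ A, ∀ x, x ∈ t → G.Adj v x → x ∈ A ∪ S := by
    intro v hv x hx hadj
    rw [Finset.mem_union]
    by_cases hxS : x ∈ S
    · exact Or.inr hxS
    · exact Or.inl (hedge v hv x hadj (Finset.mem_sdiff.mpr ⟨hx, hxS⟩))
  rcases IH (A ∪ S) hcard with hcl | ⟨v, w, hvw, hnadj, hv, hw⟩
  · refine ⟨a, haA, (Finset.mem_sdiff.mp (hAsub a haA)).1, ?_⟩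
    intro x y hx hy hax hay hxy
    exact hcl (Finset.mem_coe.mpr (hnbr a haA x hx hax))
      (Finset.mem_coe.mpr (hnbr a haA y hy hay)) hxy
  · have hpick : ∃ c, c ∈ A ∧ gpSimp G (A ∪ S) c := by
      rcases Finset.mem_union.mp hv.1 with hvA | hvS
      · exact ⟨v, hvA, hv⟩
      · rcases Finset.mem_union.mp hw.1 with hwA | hwS
        · exact ⟨w, hwA, hw⟩
        · exact absurd (hScl v hvS w hwS hvw) hnadj
    obtain ⟨c, hcA, hc⟩ := hpick
    refine ⟨c, hcA, (Finset.mem_sdiff.mp (hAsub c hcA)).1, ?_⟩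
    intro x y hx hy hcx hcy hxy
    exact hc.2 x y (hnbr c hcA x hx hcx) (hnbr c hcA y hy hcy) hcx hcy hxy

lemma gp_dirac
    (hchordal : ∀ (v : Fin n) (w : G.Walk v v), w.IsCycle → 4 ≤ w.length →
      ∃ a b : Fin n, a ∈ w.support ∧ b ∈ w.support ∧ G.Adj a b ∧ s(a, b) ∉ w.edges) :
    ∀ (m : ℕ) (t : Finset (Fin n)), t.card ≤ m →
      G.IsClique (↑t) ∨ ∃ v w, v ≠ w ∧ ¬G.Adj v w ∧ gpSimp G t v ∧ gpSimp G t w := by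
  intro m
  induction m with
  | zero =>
    intro t ht
    left
    have : t = ∅ := Finset.card_eq_zero.mp (le_antisymm ht (Nat.zero_le _))
    subst this
    simp
  | succ m ih =>
    intro t ht
    by_cases hcl : G.IsClique (↑t : Set (Fin n))
    · exact Or.inl hcl
    right
    rw [SimpleGraph.isClique_iff, Set.Pairwise] at hcl
    push_neg at hcl
    obtain ⟨a, ha, b, hb, hab, hnadj⟩ := hcl
    rw [Finset.mem_coe] at ha hb
    classical
    set F := t.powerset.filter (fun S => a ∉ S ∧ b ∉ S ∧ ¬ gpR G (t \ S) a b) with hF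
    have hS₀ : (t.erase a).erase b ∈ F := by
      rw [hF, Finset.mem_filter, Finset.mem_powerset]
      refine ⟨(Finset.erase_subset _ _).trans (Finset.erase_subset _ _), ?_, ?_, ?_⟩
      · intro h
        exact (Finset.mem_erase.mp (Finset.mem_of_mem_erase h)).1 rfl
      · intro h
        exact (Finset.mem_erase.mp h).1 rfl
      · rintro ⟨p, hp⟩
        refine gp_no_pair_walk hab hnadj p ?_
        intro y hy
        have := Finset.mem_sdiff.mp (hp y hy)
        by_contra hcon
        push_neg at hcon
        exact this.2 (Finset.mem_erase.mpr ⟨hcon.2, Finset.mem_erase.mpr ⟨hcon.1, this.1⟩⟩)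
    obtain ⟨S, hSF, hSmin⟩ := F.exists_min_image Finset.card ⟨_, hS₀⟩
    rw [hF, Finset.mem_filter, Finset.mem_powerset] at hSF
    obtain ⟨hSt, haS, hbS, hsep⟩ := hSF
    set A := (t \ S).filter (gpR G (t \ S) a) with hA
    set B := (t \ S).filter (gpR G (t \ S) b) with hB
    have hAchar : ∀ x, x ∈ A ↔ x ∈ t \ S ∧ gpR G (t \ S) a x := by
      intro x; rw [hA, Finset.mem_filter]
    have hBchar : ∀ x, x ∈ B ↔ x ∈ t \ S ∧ gpR G (t \ S) b x := by
      intro x; rw [hB, Finset.mem_filter]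
    have haA : a ∈ A := (hAchar a).mpr
      ⟨Finset.mem_sdiff.mpr ⟨ha, haS⟩, gpR.refl (Finset.mem_sdiff.mpr ⟨ha, haS⟩)⟩
    have hbB : b ∈ B := (hBchar b).mpr
      ⟨Finset.mem_sdiff.mpr ⟨hb, hbS⟩, gpR.refl (Finset.mem_sdiff.mpr ⟨hb, hbS⟩)⟩
    have hABdisj : ∀ z, z ∈ A → z ∈ B → False := by
      intro z hzA hzB
      exact hsep (gpR.trans ((hAchar z).mp hzA).2 (gpR.symm ((hBchar z).mp hzB).2))
    have hedgeA : ∀ x ∈ A, ∀ y, G.Adj x y → y ∈ t \ S → y ∈ A := by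
      intro x hx y hadj hy
      exact (hAchar y).mpr ⟨hy, gpR.extend ((hAchar x).mp hx).2 hadj hy⟩
    have hedgeB : ∀ x ∈ B, ∀ y, G.Adj x y → y ∈ t \ S → y ∈ B := by
      intro x hx y hadj hy
      exact (hBchar y).mpr ⟨hy, gpR.extend ((hBchar x).mp hx).2 hadj hy⟩
    have hAsub : A ⊆ t \ S := fun x hx => ((hAchar x).mp hx).1
    have hBsub : B ⊆ t \ S := fun x hx => ((hBchar x).mp hx).1
    -- each u ∈ S has neighbors in A and B
    have hkey : ∀ u ∈ S, (∃ x ∈ A, G.Adj u x) ∧ (∃ y ∈ B, G.Adj u y) := by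
      intro u hu
      have hau : a ≠ u := fun h => haS (h ▸ hu)
      have hbu : b ≠ u := fun h => hbS (h ▸ hu)
      have hnF : S.erase u ∉ F := by
        intro hmem
        have := hSmin _ hmem
        have h2 := Finset.card_erase_lt_of_mem hu
        omega
      have hreach : gpR G (t \ S.erase u) a b := by
        by_contra hcon
        apply hnF
        rw [hF, Finset.mem_filter, Finset.mem_powerset]
        exact ⟨(Finset.erase_subset _ _).trans hSt,
          fun h => haS (Finset.mem_of_mem_erase h),
          fun h => hbS (Finset.mem_of_mem_erase h), hcon⟩
      obtain ⟨w, hw⟩ := hreach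
      have huw : u ∈ w.support := by
        by_contra huw
        apply hsep
        refine ⟨w, fun z hz => ?_⟩
        have h1 := Finset.mem_sdiff.mp (hw z hz)
        refine Finset.mem_sdiff.mpr ⟨h1.1, fun hzS => h1.2 ?_⟩
        exact Finset.mem_erase.mpr ⟨fun h => huw (h ▸ hz), hzS⟩
      constructor
      · obtain ⟨x, ⟨hx1, hx2⟩, hx3⟩ := gp_nbr_helper hau w hw huw
        exact ⟨x, (hAchar x).mpr ⟨hx1, hx2⟩, hx3⟩
      · have hw' : ∀ y ∈ w.reverse.support, y ∈ t \ S.erase u := by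
          intro y hy
          rw [SimpleGraph.Walk.support_reverse, List.mem_reverse] at hy
          exact hw y hy
        have huw' : u ∈ w.reverse.support := by
          rw [SimpleGraph.Walk.support_reverse, List.mem_reverse]
          exact huw
        obtain ⟨y, ⟨hy1, hy2⟩, hy3⟩ := gp_nbr_helper hbu w.reverse hw' huw'
        exact ⟨y, (hBchar y).mpr ⟨hy1, hy2⟩, hy3⟩
    have hScl : ∀ u₁ ∈ S, ∀ u₂ ∈ S, u₁ ≠ u₂ → G.Adj u₁ u₂ := by
      intro u₁ h1 u₂ h2 hneq
      obtain ⟨⟨x₁, hx₁, hux₁⟩, ⟨y₁, hy₁, huy₁⟩⟩ := hkey u₁ h1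
      obtain ⟨⟨x₂, hx₂, hux₂⟩, ⟨y₂, hy₂, huy₂⟩⟩ := hkey u₂ h2
      exact gp_sep_clique hchordal (t \ S) A B hABdisj hedgeA hedgeB hAsub hBsub
        (gp_comp_conn hAchar) (gp_comp_conn hBchar)
        (fun h => (Finset.mem_sdiff.mp h).2 h1) (fun h => (Finset.mem_sdiff.mp h).2 h2)
        hneq x₁ hx₁ hux₁ x₂ hx₂ hux₂ y₁ hy₁ huy₁ y₂ hy₂ huy₂
    -- cardinality of the side sets
    have hcardA : (A ∪ S).card ≤ m := by
      have hsub : A ∪ S ⊆ t := Finset.union_subset (hAsub.trans (Finset.sdiff_subset)) hSt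
      have hbnot : b ∉ A ∪ S := by
        rw [Finset.mem_union]
        rintro (h | h)
        · exact hABdisj b h hbB
        · exact hbS h
      have : (A ∪ S).card < t.card := Finset.card_lt_card ⟨hsub, fun hsub2 => hbnot (hsub2 hb)⟩
      omega
    have hcardB : (B ∪ S).card ≤ m := by
      have hsub : B ∪ S ⊆ t := Finset.union_subset (hBsub.trans (Finset.sdiff_subset)) hSt
      have hanot : a ∉ B ∪ S := by
        rw [Finset.mem_union]
        rintro (h | h)
        · exact hABdisj a haA h
        · exact haS h
      have : (B ∪ S).card < t.card := Finset.card_lt_card ⟨hsub, fun hsub2 => hanot (hsub2 ha)⟩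
      omega
    obtain ⟨v₁, hv₁A, hv₁⟩ := gp_side m t S A a ih hSt hAchar haA hScl hcardA
    obtain ⟨v₂, hv₂B, hv₂⟩ := gp_side m t S B b ih hSt hBchar hbB hScl hcardB
    refine ⟨v₁, v₂, ?_, ?_, hv₁, hv₂⟩
    · intro h
      exact hABdisj v₁ hv₁A (h ▸ hv₂B)
    · intro hadj
      exact hABdisj v₂ (hedgeA v₁ hv₁A v₂ hadj (hBsub hv₂B)) hv₂B
end G
section M
variable {G : SimpleGraph (Fin n)}

/-- maximal cliques within a vertex set -/
def gpMaxCl (G : SimpleGraph (Fin n)) (s K : Finset (Fin n)) : Prop :=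
  K ⊆ s ∧ G.IsClique (K : Set (Fin n)) ∧
    ∀ K', K' ⊆ s → G.IsClique (K' : Set (Fin n)) → K ⊆ K' → K' = K

lemma gp_exists_maxclique {s K : Finset (Fin n)} (hKs : K ⊆ s)
    (hK : G.IsClique (K : Set (Fin n))) :
    ∃ K₂, gpMaxCl G s K₂ ∧ K ⊆ K₂ := by
  classical
  set C := s.powerset.filter (fun K' : Finset (Fin n) => G.IsClique (K' : Set (Fin n)) ∧ K ⊆ K') with hC
  have hKC : K ∈ C := by
    rw [hC, Finset.mem_filter, Finset.mem_powerset]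
    exact ⟨hKs, hK, Finset.Subset.refl K⟩
  obtain ⟨K₂, hK₂C, hmax⟩ := C.exists_max_image Finset.card ⟨K, hKC⟩
  rw [hC, Finset.mem_filter, Finset.mem_powerset] at hK₂C
  obtain ⟨hK₂s, hK₂cl, hKK₂⟩ := hK₂C
  refine ⟨K₂, ⟨hK₂s, hK₂cl, ?_⟩, hKK₂⟩
  intro K' hK's hK'cl hsub
  have hK'C : K' ∈ C := by
    rw [hC, Finset.mem_filter, Finset.mem_powerset]
    exact ⟨hK's, hK'cl, hKK₂.trans hsub⟩
  exact (Finset.eq_of_subset_of_card_le hsub (hmax K' hK'C)).symm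

lemma gp_psd_of_subclique {W : Matrix (Fin n) (Fin n) ℝ} {s : Finset (Fin n)}
    (hyp : ∀ K, gpMaxCl G s K →
      (W.submatrix (fun i : {x // x ∈ K} => (i : Fin n))
        (fun i : {x // x ∈ K} => (i : Fin n))).PosSemidef)
    {K : Finset (Fin n)} (hKs : K ⊆ s) (hK : G.IsClique (K : Set (Fin n))) :
    (W.submatrix (fun i : {x // x ∈ K} => (i : Fin n))
      (fun i : {x // x ∈ K} => (i : Fin n))).PosSemidef := by
  obtain ⟨K₂, hK₂, hsub⟩ := gp_exists_maxclique hKs hK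
  have := (hyp K₂ hK₂).submatrix (fun i : {x // x ∈ K} => (⟨i, hsub i.2⟩ : {x // x ∈ K₂}))
  rw [Matrix.submatrix_submatrix] at this
  exact this

lemma gp_main
    (hchordal : ∀ (v : Fin n) (w : G.Walk v v), w.IsCycle → 4 ≤ w.length →
      ∃ a b : Fin n, a ∈ w.support ∧ b ∈ w.support ∧ G.Adj a b ∧ s(a, b) ∉ w.edges)
    (W : Matrix (Fin n) (Fin n) ℝ) (hWsym : ∀ i j, W i j = W j i) :
    ∀ (m : ℕ) (s : Finset (Fin n)), s.card ≤ m →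
    (∀ K, gpMaxCl G s K →
      (W.submatrix (fun i : {x // x ∈ K} => (i : Fin n))
        (fun i : {x // x ∈ K} => (i : Fin n))).PosSemidef) →
    ∃ W' : Matrix (Fin n) (Fin n) ℝ, W'.PosSemidef ∧ (∀ i j, W' i j = W' j i) ∧
      (∀ i ∈ s, W' i i = W i i) ∧
      (∀ i j, i ∈ s → j ∈ s → G.Adj i j → W' i j = W i j) ∧
      (∀ i j, i ∉ s ∨ j ∉ s → W' i j = 0) := by
  intro m
  induction m with
  | zero =>
    intro s hs _
    have hse : s = ∅ := Finset.card_eq_zero.mp (le_antisymm hs (Nat.zero_le _))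
    subst hse
    refine ⟨0, ?_, by simp, by simp, by simp, by simp⟩
    exact ⟨by simp [Matrix.IsHermitian], fun x => by simp⟩
  | succ m ih =>
    intro s hs hyp
    rcases Finset.eq_empty_or_nonempty s with rfl | hsne
    · refine ⟨0, ?_, by simp, by simp, by simp, by simp⟩
      exact ⟨by simp [Matrix.IsHermitian], fun x => by simp⟩
    -- find a simplicial vertex
    have hsimp : ∃ v, v ∈ s ∧ ∀ x y, x ∈ s → y ∈ s → G.Adj v x → G.Adj v y →
        x ≠ y → G.Adj x y := by
      rcases gp_dirac hchordal s.card s le_rfl with hcl | ⟨v, _, _, _, hv, _⟩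
      · obtain ⟨v, hv⟩ := hsne
        exact ⟨v, hv, fun x y hx hy _ _ hxy =>
          hcl (Finset.mem_coe.mpr hx) (Finset.mem_coe.mpr hy) hxy⟩
      · exact ⟨v, hv.1, hv.2⟩
    obtain ⟨v, hvs, hvsimp⟩ := hsimp
    classical
    set s' := s.erase v with hs'
    have hs'card : s'.card ≤ m := by
      rw [hs', Finset.card_erase_of_mem hvs]
      have := Finset.card_pos.mpr hsne
      omega
    have hs's : s' ⊆ s := Finset.erase_subset v s
    have hvs' : v ∉ s' := Finset.notMem_erase v s
    have hyp' : ∀ K, gpMaxCl G s' K →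
        (W.submatrix (fun i : {x // x ∈ K} => (i : Fin n))
          (fun i : {x // x ∈ K} => (i : Fin n))).PosSemidef := by
      intro K hK
      exact gp_psd_of_subclique hyp (hK.1.trans hs's) hK.2.1
    obtain ⟨Wc, hWcpsd, hWcsym, hWcdiag, hWcedge, hWcsupp⟩ := ih s' hs'card hyp'
    set Nvs := s'.filter (G.Adj v) with hNvs
    have hNs : Nvs ⊆ s' := Finset.filter_subset _ _
    have hNadj : ∀ x ∈ Nvs, G.Adj v x := fun x hx => (Finset.mem_filter.mp hx).2
    have hNmem : ∀ x ∈ Nvs, x ∈ s' := fun x hx => (Finset.mem_filter.mp hx).1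
    -- Kv is a maximal clique of s
    have hKvclique : G.IsClique ((insert v Nvs : Finset (Fin n)) : Set (Fin n)) := by
      intro x hx y hy hxy
      rw [Finset.mem_coe, Finset.mem_insert] at hx hy
      rcases hx with rfl | hx <;> rcases hy with rfl | hy
      · exact absurd rfl hxy
      · exact hNadj y hy
      · exact (hNadj x hx).symm
      · exact hvsimp x y (hs's (hNmem x hx)) (hs's (hNmem y hy))
          (hNadj x hx) (hNadj y hy) hxy
    have hKvmax : gpMaxCl G s (insert v Nvs) := by
      refine ⟨?_, hKvclique, ?_⟩
      · intro x hx
        rw [Finset.mem_insert] at hx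
        rcases hx with rfl | hx
        · exact hvs
        · exact hs's (hNmem x hx)
      · intro K' hK's hK'cl hsub
        refine Finset.Subset.antisymm ?_ hsub
        intro x hx
        rw [Finset.mem_insert]
        by_cases hxv : x = v
        · exact Or.inl hxv
        · right
          have hadj : G.Adj v x := hK'cl (Finset.mem_coe.mpr (hsub (Finset.mem_insert_self v Nvs)))
            (Finset.mem_coe.mpr hx) (fun h => hxv h.symm)
          rw [hNvs, Finset.mem_filter]
          exact ⟨Finset.mem_erase.mpr ⟨hxv, hK's hx⟩, hadj⟩
    have hKv : ∀ f : Fin n → ℝ, (∀ i, i ∉ insert v Nvs → f i = 0) →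
        0 ≤ f ⬝ᵥ W.mulVec f :=
      fun f hf => gp_qf_of_psd W (insert v Nvs) (hyp _ hKvmax) f hf
    have hQeq : ∀ j k, j ∈ Nvs → k ∈ Nvs → Wc j k = W j k := by
      intro j k hj hk
      by_cases hjk : j = k
      · subst hjk
        exact hWcdiag j (hNmem j hj)
      · exact hWcedge j k (hNmem j hj) (hNmem k hk)
          (hvsimp j k (hs's (hNmem j hj)) (hs's (hNmem k hk))
            (hNadj j hj) (hNadj k hk) hjk)
    have hWcsupp' : ∀ i j : Fin n, i ∉ s' ∨ j ∉ s' → Wc i j = 0 := hWcsupp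
    obtain ⟨W', hW'psd, hW'off, hW'vv, hW'vN, hW'v0, hW'sym⟩ :=
      gp_extend W Wc hWsym hWcpsd s' hWcsupp' v hvs' Nvs hNs hQeq hKv
    refine ⟨W', hW'psd, hW'sym, ?_, ?_, ?_⟩
    · intro i hi
      by_cases hiv : i = v
      · subst hiv; exact hW'vv
      · rw [hW'off i i hiv hiv]
        exact hWcdiag i (Finset.mem_erase.mpr ⟨hiv, hi⟩)
    · intro i j hi hj hadj
      by_cases hiv : i = v
      · subst hiv
        have hjv : j ≠ i := fun h => hadj.ne h.symm
        have hjN : j ∈ Nvs := by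
          rw [hNvs, Finset.mem_filter]
          exact ⟨Finset.mem_erase.mpr ⟨hjv, hj⟩, hadj⟩
        exact hW'vN j hjN
      · by_cases hjv : j = v
        · subst hjv
          have hiN : i ∈ Nvs := by
            rw [hNvs, Finset.mem_filter]
            exact ⟨Finset.mem_erase.mpr ⟨hiv, hi⟩, hadj.symm⟩
          rw [hW'sym i j, hW'vN i hiN, hWsym j i]
        · rw [hW'off i j hiv hjv]
          exact hWcedge i j (Finset.mem_erase.mpr ⟨hiv, hi⟩)
            (Finset.mem_erase.mpr ⟨hjv, hj⟩) hadj
    · intro i j hij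
      by_cases hiv : i = v
      · subst hiv
        have hjs : j ∉ s := by
          rcases hij with h | h
          · exact absurd hvs h
          · exact h
        have hjv : j ≠ i := fun h => hjs (h ▸ hvs)
        exact hW'v0 j (fun h => hjs (hs's h)) hjv
      · by_cases hjv : j = v
        · subst hjv
          have his : i ∉ s := by
            rcases hij with h | h
            · exact h
            · exact absurd hvs h
          rw [hW'sym i j]
          exact hW'v0 i (fun h => his (hs's h)) hiv
        · rw [hW'off i j hiv hjv]
          apply hWcsupp
          rcases hij with h | h
          · exact Or.inl (fun h2 => h (hs's h2))
          · exact Or.inr (fun h2 => h (hs's h2))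
end M

/-- Matrix completion theorem (Grone et al.) -/
theorem stmt_14 (n : ℕ) (G : SimpleGraph (Fin n))
    (hchordal : ∀ (v : Fin n) (w : G.Walk v v), w.IsCycle → 4 ≤ w.length →
      ∃ a b : Fin n, a ∈ w.support ∧ b ∈ w.support ∧ G.Adj a b ∧ s(a, b) ∉ w.edges)
    (W : Matrix (Fin n) (Fin n) ℝ) (hsym : W.IsSymm) :
    (∀ s : Finset (Fin n), G.IsClique (s : Set (Fin n)) →
        (∀ t : Finset (Fin n), G.IsClique (t : Set (Fin n)) → s ⊆ t → t = s) →
        (W.submatrix (fun i : {x // x ∈ s} => (i : Fin n))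
          (fun i : {x // x ∈ s} => (i : Fin n))).PosSemidef) ↔
      ∃ W' : Matrix (Fin n) (Fin n) ℝ, W'.IsSymm ∧ W'.PosSemidef ∧
        (∀ i, W' i i = W i i) ∧ ∀ i j, G.Adj i j → W' i j = W i j := by
  constructor
  · intro h
    have hWsym' : ∀ i j, W i j = W j i := by
      intro i j
      have := congrFun (congrFun hsym i) j
      simpa [Matrix.transpose_apply] using this.symm
    have hyp : ∀ K, gpMaxCl G Finset.univ K →
        (W.submatrix (fun i : {x // x ∈ K} => (i : Fin n))
          (fun i : {x // x ∈ K} => (i : Fin n))).PosSemidef := by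
      intro K hK
      exact h K hK.2.1 (fun t ht hsub => hK.2.2 t (Finset.subset_univ t) ht hsub)
    obtain ⟨W', hpsd, hsym', hdiag, hedge, _⟩ :=
      gp_main hchordal W hWsym' Finset.univ.card Finset.univ le_rfl hyp
    refine ⟨W', ?_, hpsd, fun i => hdiag i (Finset.mem_univ i),
      fun i j hadj => hedge i j (Finset.mem_univ i) (Finset.mem_univ j) hadj⟩
    ext i j
    rw [Matrix.transpose_apply]
    exact hsym' j i
  · rintro ⟨W', hW'symm, hpsd, hdiag, hedge⟩ s hclique hmax
    have heq : (W.submatrix (fun i : {x // x ∈ s} => (i : Fin n))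
          (fun i : {x // x ∈ s} => (i : Fin n)))
        = W'.submatrix (fun i : {x // x ∈ s} => (i : Fin n))
          (fun i : {x // x ∈ s} => (i : Fin n)) := by
      ext i j
      rw [Matrix.submatrix_apply, Matrix.submatrix_apply]
      by_cases hij : (i : Fin n) = (j : Fin n)
      · rw [hij]
        exact (hdiag j).symm
      · exact (hedge i j (hclique (Finset.mem_coe.mpr i.2) (Finset.mem_coe.mpr j.2) hij)).symm
    rw [heq]
    exact hpsd.submatrix _
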